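/- For every family F of strictly increasing functions in ω^ω with |F| < 𝔡 there exists a strictly increasing g ∈ ω^ω such that either for every f ∈ F there are infinitely many n for which some m satisfies g(2n) < f(m) < f(m+1) < g(2n+1), or for every f ∈ F there are infinitely many n for which some m satisfies g(2n+1) < f(m) < f(m+1) < g(2n+2). -/

import Mathlib

open Set Filter Cardinal

/-- The dominating number 𝔡. -/
noncomputable def frakD : Cardinal :=
  sInf {c : Cardinal | ∃ F : Set (ℕ → ℕ),
    (∀ g : ℕ → ℕ, ∃ f ∈ F, ∀ᶠ n in atTop, g n ≤ f n) ∧ c = #F}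

/-- Monotone majorant of `k`. -/
def auxK (k : ℕ → ℕ) (a : ℕ) : ℕ := a + 2 + (Finset.range (a + 1)).sum k

lemma auxK_mono (k : ℕ → ℕ) : Monotone (auxK k) := by
  intro a b hab
  unfold auxK
  have : (Finset.range (a + 1)).sum k ≤ (Finset.range (b + 1)).sum k :=
    Finset.sum_le_sum_of_subset (by
      intro x hx
      simp only [Finset.mem_range] at *
      omega)
  omega

lemma le_auxK (k : ℕ → ℕ) (a : ℕ) : k a ≤ auxK k a := by
  have : k a ≤ (Finset.range (a + 1)).sum k :=
    Finset.single_le_sum (fun i _ => Nat.zero_le _) (by simp)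
  unfold auxK; omega

lemma auxK_ge (k : ℕ → ℕ) (a : ℕ) : a + 2 ≤ auxK k a := Nat.le_add_right _ _

/-- Iterates of `auxK`. -/
def auxS (k : ℕ → ℕ) (t : ℕ) : ℕ := (auxK k)^[t] 0

lemma auxS_succ (k : ℕ → ℕ) (t : ℕ) : auxS k (t + 1) = auxK k (auxS k t) := by
  unfold auxS
  rw [Function.iterate_succ_apply']

lemma auxS_step (k : ℕ → ℕ) (t : ℕ) : auxS k t + 2 ≤ auxS k (t + 1) := by
  rw [auxS_succ]; exact auxK_ge k _

lemma auxS_strictMono (k : ℕ → ℕ) : StrictMono (auxS k) :=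
  strictMono_nat_of_lt_succ (fun t => by have := auxS_step k t; omega)

/-- The gap function. -/
def auxG (k : ℕ → ℕ) (j : ℕ) : ℕ :=
  if j % 2 = 0 then auxS k (j / 2) else auxS k (j / 2 + 1) - 1

lemma auxG_even (k : ℕ → ℕ) (t : ℕ) : auxG k (2 * t) = auxS k t := by
  unfold auxG
  rw [if_pos (by omega)]
  congr 1
  omega

lemma auxG_odd (k : ℕ → ℕ) (t : ℕ) : auxG k (2 * t + 1) = auxS k (t + 1) - 1 := by
  unfold auxG
  rw [if_neg (by omega)]
  congr 2
  omega

lemma auxG_strictMono (k : ℕ → ℕ) : StrictMono (auxG k) := by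
  apply strictMono_nat_of_lt_succ
  intro j
  rcases Nat.even_or_odd j with ⟨t, ht⟩ | ⟨t, ht⟩
  · subst ht
    rw [show t + t = 2 * t by ring, auxG_even, show 2 * t + 1 = 2 * t + 1 from rfl, auxG_odd]
    have := auxS_step k t
    omega
  · subst ht
    rw [show 2 * t + 1 + 1 = 2 * (t + 1) by ring, auxG_even, auxG_odd]
    have := auxS_step k t
    omega

theorem exists_gap_function (F : Set (ℕ → ℕ)) (hF : ∀ f ∈ F, StrictMono f)
    (hcard : #F < frakD) :
    ∃ g : ℕ → ℕ, StrictMono g ∧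
      ((∀ f ∈ F, {n : ℕ | ∃ m, g (2*n) < f m ∧ f m < f (m+1) ∧ f (m+1) < g (2*n+1)}.Infinite) ∨
       (∀ f ∈ F, {n : ℕ | ∃ m, g (2*n+1) < f m ∧ f m < f (m+1) ∧ f (m+1) < g (2*n+2)}.Infinite)) := by
  -- Step 1: get a function `k` frequently beating `n ↦ f (n+6)` for every `f ∈ F`.
  have hk : ∃ k : ℕ → ℕ, ∀ f ∈ F, ∃ᶠ n in atTop, f (n + 6) < k n := by
    by_contra h
    push_neg at h
    have hdom : ∀ g : ℕ → ℕ, ∃ h' ∈ (fun (f : ℕ → ℕ) => fun n => f (n + 6)) '' F,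
        ∀ᶠ n in atTop, g n ≤ h' n := by
      intro g
      obtain ⟨f, hfF, hf⟩ := h g
      refine ⟨fun n => f (n + 6), ⟨f, hfF, rfl⟩, ?_⟩
      filter_upwards [hf] with n hn
      exact hn
    have h1 : frakD ≤ #((fun (f : ℕ → ℕ) => fun n => f (n + 6)) '' F) :=
      csInf_le' ⟨_, hdom, rfl⟩
    have h2 := Cardinal.mk_image_le (f := fun (f : ℕ → ℕ) => fun n => f (n + 6)) (s := F)
    exact absurd hcard (not_lt.mpr (h1.trans h2))
  obtain ⟨k, hk⟩ := hk
  refine ⟨auxG k, auxG_strictMono k, Or.inl ?_⟩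
  intro f hfF
  have hfm := hF f hfF
  apply Set.infinite_of_not_bddAbove
  rw [not_bddAbove_iff]
  intro N
  -- get n ≥ auxS k (N+1) with f (n+6) < k n
  obtain ⟨n, hn1, hn2⟩ := Filter.frequently_atTop.mp (hk f hfF) (auxS k (N + 1))
  -- locate n in the interval structure: find t with auxS t ≤ n < auxS (t+1)
  have hex : ∃ t, n < auxS k (t + 1) := by
    refine ⟨n, ?_⟩
    have h5 : n + 1 ≤ auxS k (n + 1) := (auxS_strictMono k).le_apply
    omega
  set t := Nat.find hex with htdef
  have ht1 : n < auxS k (t + 1) := Nat.find_spec hex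
  have ht0 : auxS k t ≤ n := by
    rcases Nat.eq_zero_or_pos t with h0 | h0
    · rw [h0]; exact Nat.zero_le n
    · have h2 := Nat.find_min hex (m := t - 1) (by omega)
      push_neg at h2
      have h3 : t - 1 + 1 = t := by omega
      rw [h3] at h2
      omega
  have htN : N < t := by
    by_contra hc
    push_neg at hc
    have : auxS k (t + 1) ≤ auxS k (N + 1) := (auxS_strictMono k).monotone (by omega)
    omega
  -- find least m with n < f m
  have hle : n + 1 ≤ f (n + 1) := hfm.le_apply
  have hexm : ∃ m, n < f m := ⟨n + 1, by omega⟩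
  set m := Nat.find hexm with hmdef
  have hm1 : n < f m := Nat.find_spec hexm
  have hm2 : m ≤ n + 1 := Nat.find_min' hexm (by omega)
  -- chain of values
  have hc1 : f m < f (m + 1) := hfm (by omega)
  have hc2 : f (m + 1) < f (m + 2) := hfm (by omega)
  have hc3 : f (m + 2) < f (m + 3) := hfm (by omega)
  have hc4 : f (m + 3) < f (m + 4) := hfm (by omega)
  have hc5 : f (m + 4) < f (m + 5) := hfm (by omega)
  have hub : f (m + 5) < auxS k (t + 2) := by
    have h1 : f (m + 5) ≤ f (n + 6) := hfm.monotone (by omega)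
    have h2 : k n ≤ auxK k n := le_auxK k n
    have h3 : auxK k n ≤ auxK k (auxS k (t + 1)) := auxK_mono k (by omega)
    have h4 : auxS k (t + 2) = auxK k (auxS k (t + 1)) := auxS_succ k (t + 1)
    omega
  have hstep1 := auxS_step k t
  have hstep2 := auxS_step k (t + 1)
  by_cases hcase : f (m + 1) < auxS k (t + 1) - 1
  · refine ⟨t, ⟨m, ?_, hc1, ?_⟩, htN⟩
    · rw [auxG_even]; omega
    · rw [auxG_odd]; omega
  · refine ⟨t + 1, ⟨m + 3, ?_, hc4, ?_⟩, by omega⟩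
    · rw [auxG_even]
      omega
    · rw [auxG_odd]
      have e1 : m + 3 + 1 = m + 4 := rfl
      have e2 : t + 1 + 1 = t + 2 := rfl
      rw [e1, e2]
      omega
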